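/- If C ≤ F_2^n is a binary linear code such that 2^r divides |c| for every c in some spanning set S of C and 2^{r−|A|+1} divides |∏A| for every subset A ⊆ S with 2 ≤ |A| ≤ r+1, then 2^r divides |c| for every codeword c ∈ C. -/

import Mathlib

/-- Hamming weight of a vector in `F_2^n`. -/
def wt {n : ℕ} (v : Fin n → ZMod 2) : ℕ :=
  (Finset.univ.filter fun i => v i = 1).card

open Finset
open scoped symmDiff

lemma zmod2_cases : ∀ x : ZMod 2, x = 0 ∨ x = 1 := by decide

lemma self_add_self {n : ℕ} (v : Fin n → ZMod 2) : v + v = 0 := by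
  funext i
  exact CharTwo.add_self_eq_zero (v i)

lemma sum_symmDiff_eq {n : ℕ} (T₁ T₂ : Finset (Fin n → ZMod 2)) :
    ∑ v ∈ T₁ ∆ T₂, v = (∑ v ∈ T₁, v) + ∑ v ∈ T₂, v := by
  have hdisj : Disjoint (T₁ ∆ T₂) (T₁ ∩ T₂) := disjoint_symmDiff_inf T₁ T₂
  have hun : (T₁ ∆ T₂) ∪ (T₁ ∩ T₂) = T₁ ∪ T₂ := symmDiff_sup_inf T₁ T₂
  have h1 : (∑ v ∈ T₁, v) + ∑ v ∈ T₂, v = (∑ v ∈ T₁ ∪ T₂, v) + ∑ v ∈ T₁ ∩ T₂, v :=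
    (Finset.sum_union_inter).symm
  have h2 : ∑ v ∈ T₁ ∪ T₂, v = (∑ v ∈ T₁ ∆ T₂, v) + ∑ v ∈ T₁ ∩ T₂, v := by
    rw [← hun, Finset.sum_union hdisj]
  rw [h1, h2, add_assoc, self_add_self, add_zero]

lemma exists_subset_sum {n : ℕ} {S : Finset (Fin n → ZMod 2)} {c : Fin n → ZMod 2}
    (hc : c ∈ Submodule.span (ZMod 2) (S : Set (Fin n → ZMod 2))) :
    ∃ T, T ⊆ S ∧ c = ∑ v ∈ T, v := by
  induction hc using Submodule.span_induction with
  | mem x hx => exact ⟨{x}, by simpa using hx, by simp⟩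
  | zero => exact ⟨∅, by simp, by simp⟩
  | add x y _ _ hx hy =>
      obtain ⟨T₁, hT₁, rfl⟩ := hx
      obtain ⟨T₂, hT₂, rfl⟩ := hy
      refine ⟨T₁ ∆ T₂, ?_, (sum_symmDiff_eq T₁ T₂).symm⟩
      intro a ha
      rcases Finset.mem_symmDiff.mp ha with ⟨h, _⟩ | ⟨h, _⟩
      exacts [hT₁ h, hT₂ h]
  | smul a x _ hx =>
      obtain ⟨T, hT, rfl⟩ := hx
      rcases zmod2_cases a with rfl | rfl
      · exact ⟨∅, by simp, by simp⟩
      · exact ⟨T, hT, by simp⟩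

lemma prod_apply_eq_one_iff {n : ℕ} (A : Finset (Fin n → ZMod 2)) (i : Fin n) :
    (∏ c ∈ A, c) i = 1 ↔ ∀ c ∈ A, c i = 1 := by
  rw [Finset.prod_apply]
  constructor
  · intro h c hc
    by_contra hne
    have hc0 : c i = 0 := (zmod2_cases (c i)).resolve_right hne
    rw [Finset.prod_eq_zero hc hc0] at h
    exact absurd h (by decide)
  · exact Finset.prod_eq_one

lemma wt_eq_sum_ite {n : ℕ} (v : Fin n → ZMod 2) :
    (wt v : ℤ) = ∑ i, (if v i = 1 then (1 : ℤ) else 0) := by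
  rw [wt, Finset.card_filter]
  push_cast
  rfl

/-- Sum of `(-2)^(|J|-1)` over nonempty subsets of `U`. -/
lemma sum_neg_two_pow {α : Type*} [DecidableEq α] (U : Finset α) :
    ∑ J ∈ U.powerset.filter (fun J => J ≠ ∅), (-2 : ℤ) ^ (J.card - 1) =
      if (U.card : ZMod 2) = 1 then 1 else 0 := by
  apply mul_left_cancel₀ (show (-2 : ℤ) ≠ 0 by norm_num)
  rw [Finset.mul_sum]
  have hterm : ∀ J ∈ U.powerset.filter (fun J => J ≠ ∅),
      (-2 : ℤ) * (-2 : ℤ) ^ (J.card - 1) = (-2 : ℤ) ^ J.card := by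
    intro J hJ
    simp only [mem_filter] at hJ
    have h1 : 1 ≤ J.card := Finset.card_pos.mpr (Finset.nonempty_iff_ne_empty.mpr hJ.2)
    rw [← pow_succ']
    congr 1
    omega
  rw [Finset.sum_congr rfl hterm]
  have hfull : ∑ J ∈ U.powerset, (-2 : ℤ) ^ J.card = (-1 : ℤ) ^ U.card := by
    have := Finset.sum_pow_mul_eq_add_pow (-2 : ℤ) 1 U
    simp only [one_pow, mul_one] at this
    rw [this]; norm_num
  have hfilter : U.powerset.filter (fun J => J ≠ ∅) = U.powerset.erase ∅ := by
    ext J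
    simp [Finset.mem_erase, and_comm]
  have hmem : (∅ : Finset α) ∈ U.powerset := Finset.mem_powerset.mpr (Finset.empty_subset U)
  have hsplit : ∑ J ∈ U.powerset.filter (fun J => J ≠ ∅), (-2 : ℤ) ^ J.card
      = (-1 : ℤ) ^ U.card - 1 := by
    rw [hfilter, ← hfull, Finset.sum_erase_eq_sub hmem]
    simp
  rw [hsplit]
  have hcast : ((U.card : ZMod 2) = 1) ↔ U.card % 2 = 1 := by
    rw [← ZMod.natCast_mod U.card 2]
    rcases Nat.mod_two_eq_zero_or_one U.card with h | h <;> rw [h] <;> simp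
  by_cases hc : (U.card : ZMod 2) = 1
  · rw [if_pos hc]
    have : Odd U.card := Nat.odd_iff.mpr (hcast.mp hc)
    rw [Odd.neg_one_pow this]; ring
  · rw [if_neg hc]
    have : Even U.card := Nat.even_iff.mpr (by
      rcases Nat.mod_two_eq_zero_or_one U.card with h | h
      · exact h
      · exact absurd (hcast.mpr h) hc)
    rw [Even.neg_one_pow this]; ring

lemma wt_sum_eq {n : ℕ} (T : Finset (Fin n → ZMod 2)) :
    (wt (∑ v ∈ T, v) : ℤ) =
      ∑ J ∈ T.powerset.filter (fun J => J ≠ ∅),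
        (-2 : ℤ) ^ (J.card - 1) * (wt (∏ c ∈ J, c) : ℤ) := by
  rw [wt_eq_sum_ite]
  have hr : ∀ J ∈ T.powerset.filter (fun J => J ≠ ∅),
      (-2 : ℤ) ^ (J.card - 1) * (wt (∏ c ∈ J, c) : ℤ) =
      ∑ i, (-2 : ℤ) ^ (J.card - 1) * (if (∏ c ∈ J, c) i = 1 then (1 : ℤ) else 0) := by
    intro J _
    rw [wt_eq_sum_ite, Finset.mul_sum]
  rw [Finset.sum_congr rfl hr, Finset.sum_comm]
  apply Finset.sum_congr rfl
  intro i _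
  -- per-coordinate identity
  set U := T.filter (fun v => v i = 1) with hU
  have hUsub : U ⊆ T := Finset.filter_subset _ _
  -- RHS equals sum over nonempty subsets of U
  have hzero : ∀ J ∈ T.powerset.filter (fun J => J ≠ ∅),
      J ∉ U.powerset.filter (fun J => J ≠ ∅) →
      (-2 : ℤ) ^ (J.card - 1) * (if (∏ c ∈ J, c) i = 1 then (1 : ℤ) else 0) = 0 := by
    intro J hJ hJn
    simp only [Finset.mem_filter, Finset.mem_powerset] at hJ hJn
    have hnotsub : ¬ J ⊆ U := fun h => hJn ⟨h, hJ.2⟩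
    have : ¬ (∏ c ∈ J, c) i = 1 := by
      rw [prod_apply_eq_one_iff]
      intro hall
      exact hnotsub (fun c hc => Finset.mem_filter.mpr ⟨hJ.1 hc, hall c hc⟩)
    rw [if_neg this, mul_zero]
  have hsubsets : U.powerset.filter (fun J => J ≠ ∅) ⊆ T.powerset.filter (fun J => J ≠ ∅) := by
    intro J hJ
    simp only [Finset.mem_filter, Finset.mem_powerset] at hJ ⊢
    exact ⟨hJ.1.trans hUsub, hJ.2⟩
  rw [← Finset.sum_subset hsubsets hzero]
  have hone : ∀ J ∈ U.powerset.filter (fun J => J ≠ ∅),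
      (-2 : ℤ) ^ (J.card - 1) * (if (∏ c ∈ J, c) i = 1 then (1 : ℤ) else 0) =
      (-2 : ℤ) ^ (J.card - 1) := by
    intro J hJ
    simp only [Finset.mem_filter, Finset.mem_powerset] at hJ
    have : (∏ c ∈ J, c) i = 1 := by
      rw [prod_apply_eq_one_iff]
      intro c hc
      exact (Finset.mem_filter.mp (hJ.1 hc)).2
    rw [if_pos this, mul_one]
  rw [Finset.sum_congr rfl hone, sum_neg_two_pow]
  -- LHS indicator
  have hcoord : (∑ v ∈ T, v) i = (U.card : ZMod 2) := by
    rw [Finset.sum_apply]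
    rw [← Finset.sum_filter_add_sum_filter_not T (fun v => v i = 1) (fun v => v i)]
    have h1 : ∑ v ∈ U, v i = (U.card : ZMod 2) := by
      rw [Finset.sum_congr rfl (fun v hv => (Finset.mem_filter.mp hv).2)]
      simp
      rfl
    have h2 : ∑ v ∈ T.filter (fun v => ¬ v i = 1), v i = 0 := by
      apply Finset.sum_eq_zero
      intro v hv
      exact (zmod2_cases (v i)).resolve_right (Finset.mem_filter.mp hv).2
    rw [h1, h2, add_zero]
  rw [hcoord]

/-- Divisibility criterion: if every vector in a spanning set `S` of `C` has weight
divisible by `2^r`, and `2^{r−|A|+1}` divides `|∏A|` for every `A ⊆ S` with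
`2 ≤ |A| ≤ r+1`, then `2^r` divides the weight of every codeword of `C`. -/
theorem level_from_spanning_set (n r : ℕ) (S : Finset (Fin n → ZMod 2))
    (C : Submodule (ZMod 2) (Fin n → ZMod 2))
    (hspan : Submodule.span (ZMod 2) (S : Set (Fin n → ZMod 2)) = C)
    (h1 : ∀ c ∈ S, 2 ^ r ∣ wt c)
    (h2 : ∀ A ⊆ S, 2 ≤ A.card → A.card ≤ r + 1 →
      2 ^ (r - A.card + 1) ∣ wt (∏ c ∈ A, c)) :
    ∀ c ∈ C, 2 ^ r ∣ wt c := by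
  intro c hc
  rw [← hspan] at hc
  obtain ⟨T, hTS, rfl⟩ := exists_subset_sum hc
  have key := wt_sum_eq T
  have hdvd : (2 : ℤ) ^ r ∣ (wt (∑ v ∈ T, v) : ℤ) := by
    rw [key]
    apply Finset.dvd_sum
    intro J hJ
    simp only [Finset.mem_filter, Finset.mem_powerset] at hJ
    obtain ⟨hJT, hJne⟩ := hJ
    have hpos : 1 ≤ J.card := Finset.card_pos.mpr (Finset.nonempty_iff_ne_empty.mpr hJne)
    have hpow : ∀ k : ℕ, (2 : ℤ) ^ k ∣ (-2 : ℤ) ^ k := by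
      intro k
      exact ⟨(-1) ^ k, by rw [← neg_one_mul, mul_pow]; ring⟩
    rcases eq_or_lt_of_le hpos with h1c | h2c
    · -- |J| = 1
      obtain ⟨v, rfl⟩ := Finset.card_eq_one.mp h1c.symm
      have hv : v ∈ S := hTS (hJT (Finset.mem_singleton_self v))
      have hh := Int.natCast_dvd_natCast.mpr (h1 v hv)
      push_cast at hh
      simp only [Finset.prod_singleton, Finset.card_singleton]
      norm_num
      exact hh
    · rcases le_or_gt J.card (r + 1) with hle | hgt
      · -- 2 ≤ |J| ≤ r+1
        have hd := h2 J (hJT.trans hTS) h2c hle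
        obtain ⟨m, hm⟩ := hd
        have : (-2 : ℤ) ^ (J.card - 1) * (wt (∏ c ∈ J, c) : ℤ) =
            (-2 : ℤ) ^ (J.card - 1) * (2 ^ (r - J.card + 1) * m) := by
          push_cast [hm]; ring
        rw [this]
        have hdd : (2 : ℤ) ^ ((J.card - 1) + (r - J.card + 1)) ∣
            (-2 : ℤ) ^ (J.card - 1) * ((2 : ℤ) ^ (r - J.card + 1) * m) := by
          rw [pow_add]
          exact mul_dvd_mul (hpow _) (Dvd.intro _ rfl)
        refine dvd_trans (pow_dvd_pow 2 ?_) hdd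
        omega
      · -- |J| ≥ r+2
        refine dvd_mul_of_dvd_left (dvd_trans (pow_dvd_pow 2 ?_) (hpow (J.card - 1))) _
        omega
  have : ((2 ^ r : ℕ) : ℤ) ∣ (wt (∑ v ∈ T, v) : ℤ) := by push_cast; exact hdvd
  exact_mod_cast this
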